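/- Define S_M = ∑_{j=1}^{M-1} j/(M-j) for integers M ≥ 1 (so S_1 = 0). Then S_M ≤ M·log M for all M ≥ 1, and lim_{M→∞} S_M/(M·log M) = 1, where log is the natural logarithm. -/

import Mathlib

open Finset Filter

noncomputable def Hh (n : ℕ) : ℝ := ∑ i ∈ Finset.Icc 1 n, (1 : ℝ) / i

lemma Hh_succ (n : ℕ) : Hh (n + 1) = Hh n + 1 / (n + 1) := by
  unfold Hh
  rw [Finset.sum_Icc_succ_top (by omega)]
  push_cast; ring

lemma log_le_Hh (n : ℕ) : Real.log (n + 1) ≤ Hh n := by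
  induction n with
  | zero => simp [Hh]
  | succ n ih =>
    rw [Hh_succ]
    have h1 : Real.log ((n:ℝ) + 1 + 1) - Real.log ((n:ℝ)+1) ≤ 1/((n:ℝ)+1) := by
      have hp : (0:ℝ) < (n:ℝ) + 1 := by positivity
      rw [← Real.log_div (by positivity) (by positivity)]
      have := Real.log_le_sub_one_of_pos (x := ((n:ℝ)+1+1)/((n:ℝ)+1)) (by positivity)
      calc Real.log (((n:ℝ)+1+1)/((n:ℝ)+1)) ≤ ((n:ℝ)+1+1)/((n:ℝ)+1) - 1 := this
        _ = 1/((n:ℝ)+1) := by field_simp; ring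
    push_cast
    push_cast at ih
    linarith

lemma Hh_le (n : ℕ) (hn : 1 ≤ n) : Hh n ≤ 1 + Real.log n := by
  induction n, hn using Nat.le_induction with
  | base => simp [Hh]
  | succ n hn ih =>
    rw [Hh_succ]
    have hp : (0:ℝ) < (n:ℝ) := by exact_mod_cast hn
    have h1 : 1/((n:ℝ)+1) ≤ Real.log ((n:ℝ)+1) - Real.log n := by
      rw [← Real.log_div (by positivity) (by positivity)]
      have := Real.one_sub_inv_le_log_of_pos (x := ((n:ℝ)+1)/n) (by positivity)
      calc (1:ℝ)/((n:ℝ)+1) = 1 - (((n:ℝ)+1)/n)⁻¹ := by field_simp; ring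
        _ ≤ Real.log (((n:ℝ)+1)/n) := this
    push_cast
    linarith

lemma key (M : ℕ) (hM : 1 ≤ M) :
    ∑ j ∈ Finset.Icc 1 (M - 1), (j : ℝ) / ((M : ℝ) - (j : ℝ))
      = M * Hh (M - 1) - ((M : ℝ) - 1) := by
  have h1 : ∑ j ∈ Finset.Icc 1 (M - 1), (j : ℝ) / ((M : ℝ) - (j : ℝ))
      = ∑ i ∈ Finset.Icc 1 (M - 1), ((M : ℝ) - (i : ℝ)) / (i : ℝ) := by
    apply Finset.sum_nbij' (i := fun j => M - j) (j := fun i => M - i)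
    · intro a ha; simp only [Finset.mem_Icc] at *; omega
    · intro a ha; simp only [Finset.mem_Icc] at *; omega
    · intro a ha; simp only [Finset.mem_Icc] at ha; omega
    · intro a ha; simp only [Finset.mem_Icc] at ha; omega
    · intro a ha
      simp only [Finset.mem_Icc] at ha
      have hc : ((M - a : ℕ) : ℝ) = (M : ℝ) - a := by
        have : a ≤ M := by omega
        push_cast [this]; ring
      rw [hc]; ring_nf
  rw [h1]
  have h2 : ∀ i ∈ Finset.Icc 1 (M-1), ((M : ℝ) - (i : ℝ)) / (i : ℝ)
      = (M : ℝ) * (1 / (i : ℝ)) - 1 := by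
    intro i hi
    simp only [Finset.mem_Icc] at hi
    have : (0:ℝ) < i := by exact_mod_cast hi.1
    field_simp
  rw [Finset.sum_congr rfl h2, Finset.sum_sub_distrib, ← Finset.mul_sum]
  unfold Hh
  simp only [Finset.sum_const, Nat.card_Icc, nsmul_eq_mul, mul_one]
  have hc : ((M - 1 + 1 - 1 : ℕ) : ℝ) = (M:ℝ) - 1 := by
    have h : M - 1 + 1 - 1 = M - 1 := by omega
    rw [h, Nat.cast_sub hM]; simp
  rw [hc]

lemma logdiff (M : ℕ) (hM : 2 ≤ M) :
    1 / (M:ℝ) ≤ Real.log M - Real.log ((M:ℝ) - 1) := by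
  have hp : (0:ℝ) < (M:ℝ) - 1 := by
    have : (2:ℝ) ≤ M := by exact_mod_cast hM
    linarith
  have hm : (0:ℝ) < M := by positivity
  rw [← Real.log_div (by positivity) (by positivity)]
  have := Real.one_sub_inv_le_log_of_pos (x := (M:ℝ)/((M:ℝ)-1)) (by positivity)
  calc (1:ℝ)/(M:ℝ) = 1 - ((M:ℝ)/((M:ℝ)-1))⁻¹ := by field_simp; ring
    _ ≤ _ := this

lemma upper (M : ℕ) (hM : 1 ≤ M) :
    ∑ j ∈ Finset.Icc 1 (M - 1), (j : ℝ) / ((M : ℝ) - (j : ℝ)) ≤ (M : ℝ) * Real.log M := by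
  rcases eq_or_lt_of_le hM with h1 | h2
  · simp [← h1]
  · have hM2 : 2 ≤ M := h2
    rw [key M hM]
    have hH : Hh (M - 1) ≤ 1 + Real.log ((M:ℝ) - 1) := by
      have := Hh_le (M - 1) (by omega)
      have hc : ((M - 1 : ℕ) : ℝ) = (M:ℝ) - 1 := by push_cast [hM]; ring
      rwa [hc] at this
    have hd := logdiff M hM2
    have hm : (0:ℝ) < M := by positivity
    have hmul : (1:ℝ) ≤ (M:ℝ) * (Real.log M - Real.log ((M:ℝ) - 1)) := by
      calc (1:ℝ) = (M:ℝ) * (1/(M:ℝ)) := by field_simp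
        _ ≤ _ := by apply mul_le_mul_of_nonneg_left hd hm.le
    nlinarith [hm.le]

lemma lower (M : ℕ) (hM : 1 ≤ M) :
    (M : ℝ) * Real.log M - (M:ℝ)
      ≤ ∑ j ∈ Finset.Icc 1 (M - 1), (j : ℝ) / ((M : ℝ) - (j : ℝ)) := by
  rw [key M hM]
  have hH : Real.log M ≤ Hh (M - 1) := by
    have := log_le_Hh (M - 1)
    have hc : ((M - 1 : ℕ) : ℝ) + 1 = (M:ℝ) := by rw [Nat.cast_sub hM]; simp
    rwa [hc] at this
  have hm : (0:ℝ) ≤ M := by positivity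
  nlinarith

theorem stmt_2 (S : ℕ → ℝ)
    (hS : ∀ M : ℕ, S M = ∑ j ∈ Finset.Icc 1 (M - 1), (j : ℝ) / ((M : ℝ) - (j : ℝ))) :
    (∀ M : ℕ, 1 ≤ M → S M ≤ (M : ℝ) * Real.log M) ∧
      Tendsto (fun M : ℕ => S M / ((M : ℝ) * Real.log M)) atTop (nhds 1) := by
  constructor
  · intro M hM; rw [hS M]; exact upper M hM
  · have hlog : Tendsto (fun M : ℕ => Real.log M) atTop atTop :=
      Real.tendsto_log_atTop.comp tendsto_natCast_atTop_atTop
    have hinv : Tendsto (fun M : ℕ => 1 / Real.log M) atTop (nhds 0) := by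
      simp only [one_div]; exact hlog.inv_tendsto_atTop
    have hg : Tendsto (fun M : ℕ => 1 - 1 / Real.log M) atTop (nhds 1) := by
      have := (tendsto_const_nhds (x := (1:ℝ)) (f := atTop)).sub hinv
      simpa using this
    apply tendsto_of_tendsto_of_tendsto_of_le_of_le' hg tendsto_const_nhds
    · filter_upwards [eventually_ge_atTop 2] with M hM
      have h2 : (2:ℝ) ≤ M := by exact_mod_cast hM
      have hL : (0:ℝ) < Real.log M := Real.log_pos (by linarith)
      have hm : (0:ℝ) < M := by linarith
      have hML : (0:ℝ) < (M:ℝ) * Real.log M := by positivity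
      rw [hS M, le_div_iff₀ hML]
      have := lower M (by omega)
      calc (1 - 1/Real.log M) * ((M:ℝ) * Real.log M)
          = (M:ℝ) * Real.log M - (M:ℝ) := by field_simp
        _ ≤ _ := this
    · filter_upwards [eventually_ge_atTop 2] with M hM
      have h2 : (2:ℝ) ≤ M := by exact_mod_cast hM
      have hL : (0:ℝ) < Real.log M := Real.log_pos (by linarith)
      have hML : (0:ℝ) < (M:ℝ) * Real.log M := by positivity
      rw [hS M, div_le_one hML]
      exact upper M (by omega)
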